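/- The function f(x) = x²/2 − l_{γ,c}(x) is convex on ℝ, where l_{γ,c} is the HOC function. -/

import Mathlib

/-- The hybrid ordinary-Cauchy (HOC) function with parameters `γ, c > 0`. -/
noncomputable def hoc (γ c x : ℝ) : ℝ :=
  if |x| ≤ c then x ^ 2 / 2
  else (γ ^ 2 + c ^ 2) / 2 * Real.log (1 + x ^ 2 / γ ^ 2) + c ^ 2 / 2 -
    (γ ^ 2 + c ^ 2) / 2 * Real.log (1 + c ^ 2 / γ ^ 2)

namespace HocAux

noncomputable def ψ (γ c x : ℝ) : ℝ :=
  x ^ 2 / 2 - ((γ ^ 2 + c ^ 2) / 2 * Real.log (1 + x ^ 2 / γ ^ 2) + c ^ 2 / 2 -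
    (γ ^ 2 + c ^ 2) / 2 * Real.log (1 + c ^ 2 / γ ^ 2))

noncomputable def f (γ c x : ℝ) : ℝ := x ^ 2 / 2 - hoc γ c x

noncomputable def f' (γ c x : ℝ) : ℝ :=
  if |x| ≤ c then 0 else x - (γ ^ 2 + c ^ 2) * x / (γ ^ 2 + x ^ 2)

lemma f_eq (γ c x : ℝ) :
    f γ c x = if |x| ≤ c then 0 else ψ γ c x := by
  unfold f hoc ψ
  split <;> ring

lemma hasDerivAt_ψ (γ c : ℝ) (hγ : 0 < γ) (x : ℝ) :
    HasDerivAt (ψ γ c) (x - (γ ^ 2 + c ^ 2) * x / (γ ^ 2 + x ^ 2)) x := by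
  have hγ2 : (0:ℝ) < γ ^ 2 := by positivity
  have hpos : (0:ℝ) < 1 + x ^ 2 / γ ^ 2 := by positivity
  have h1 : HasDerivAt (fun y : ℝ => 1 + y ^ 2 / γ ^ 2) (2 * x / γ ^ 2) x := by
    have := (hasDerivAt_pow 2 x).div_const (γ ^ 2)
    simpa [pow_one] using (this.const_add 1)
  have hlog : HasDerivAt (fun y : ℝ => Real.log (1 + y ^ 2 / γ ^ 2))
      ((2 * x / γ ^ 2) / (1 + x ^ 2 / γ ^ 2)) x := h1.log hpos.ne'
  have hsq : HasDerivAt (fun y : ℝ => y ^ 2 / 2) x x := by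
    simpa [pow_one] using (hasDerivAt_pow 2 x).div_const 2
  have := hsq.sub (((hlog.const_mul ((γ ^ 2 + c ^ 2) / 2)).add_const
      (c ^ 2 / 2)).sub_const ((γ ^ 2 + c ^ 2) / 2 * Real.log (1 + c ^ 2 / γ ^ 2)))
  refine HasDerivAt.congr_deriv this ?_
  have hne : γ ^ 2 + x ^ 2 ≠ 0 := by positivity
  field_simp

lemma hasDerivAt_f (γ c : ℝ) (hγ : 0 < γ) (hc : 0 < c) (x : ℝ) :
    HasDerivAt (f γ c) (f' γ c x) x := by
  have hψc : ∀ z : ℝ, |z| = c → ψ γ c z = 0 := by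
    intro z hz
    have : z ^ 2 = c ^ 2 := by rw [← sq_abs, hz]
    simp [ψ, this]
  have hψ'c : ∀ z : ℝ, |z| = c →
      z - (γ ^ 2 + c ^ 2) * z / (γ ^ 2 + z ^ 2) = 0 := by
    intro z hz
    have hz2 : z ^ 2 = c ^ 2 := by rw [← sq_abs, hz]
    have hne : γ ^ 2 + z ^ 2 ≠ 0 := by positivity
    rw [hz2]
    field_simp
    ring
  rcases lt_trichotomy (|x|) c with h | h | h
  · -- interior of the flat region
    have hf'x : f' γ c x = 0 := by simp [f', h.le]
    rw [hf'x]
    have hev : f γ c =ᶠ[nhds x] (fun _ => 0) := by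
      have : ∀ᶠ y in nhds x, |y| < c :=
        Filter.eventually_of_mem
          ((isOpen_lt continuous_abs continuous_const).mem_nhds h) (fun y hy => hy)
      filter_upwards [this] with y hy
      simp [f_eq, hy.le]
    exact (hasDerivAt_const x 0).congr_of_eventuallyEq hev
  · -- boundary: x = c or x = -c
    have hf'x : f' γ c x = 0 := by simp [f', h.le]
    rw [hf'x]
    have hψ0 : ψ γ c x = 0 := hψc x h
    have hψ'0 : x - (γ ^ 2 + c ^ 2) * x / (γ ^ 2 + x ^ 2) = 0 := hψ'c x h
    have hfx0 : f γ c x = 0 := by simp [f_eq, h.le]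
    rcases abs_eq hc.le |>.mp h with hx | hx
    · -- x = c : flat on the left, ψ on the right
      have hleft : HasDerivWithinAt (f γ c) 0 (Set.Iic x) x := by
        have h0 : HasDerivWithinAt (fun _ : ℝ => (0 : ℝ)) 0
            (Set.Iic x ∩ Set.Ioi (-c)) x := (hasDerivAt_const x 0).hasDerivWithinAt
        have h1 : HasDerivWithinAt (f γ c) 0 (Set.Iic x ∩ Set.Ioi (-c)) x := by
          refine h0.congr (fun y hy => ?_) (by simpa using hfx0)
          have : |y| ≤ c := abs_le.mpr ⟨hy.2.le, hy.1.trans_eq hx⟩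
          simp [f_eq, this]
        exact h1.mono_of_mem_nhdsWithin
          (Filter.inter_mem self_mem_nhdsWithin
            (nhdsWithin_le_nhds (Ioi_mem_nhds (by rw [hx]; linarith))))
      have hright : HasDerivWithinAt (f γ c) 0 (Set.Ici x) x := by
        have hψd : HasDerivWithinAt (ψ γ c) 0 (Set.Ici x) x := by
          simpa [hψ'0] using (hasDerivAt_ψ γ c hγ x).hasDerivWithinAt
            (s := Set.Ici x)
        refine hψd.congr (fun y hy => ?_) (by rw [hfx0, hψ0])
        rcases lt_or_ge c (|y|) with h' | h'
        · simp [f_eq, not_le.mpr h']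
        · have hy0 : 0 ≤ y := le_trans (hx ▸ hc.le) hy
          have hyc : |y| = c := le_antisymm h'
            (by rw [abs_of_nonneg hy0]; exact hx ▸ hy)
          rw [hψc y hyc]; simp [f_eq, h']
      have := hleft.union hright
      rw [Set.Iic_union_Ici] at this
      exact hasDerivWithinAt_univ.mp this
    · -- x = -c : ψ on the left, flat on the right
      have hright : HasDerivWithinAt (f γ c) 0 (Set.Ici x) x := by
        have h0 : HasDerivWithinAt (fun _ : ℝ => (0 : ℝ)) 0
            (Set.Ici x ∩ Set.Iio c) x := (hasDerivAt_const x 0).hasDerivWithinAt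
        have h1 : HasDerivWithinAt (f γ c) 0 (Set.Ici x ∩ Set.Iio c) x := by
          refine h0.congr (fun y hy => ?_) (by simpa using hfx0)
          have : |y| ≤ c := abs_le.mpr ⟨hx ▸ hy.1, hy.2.le⟩
          simp [f_eq, this]
        exact h1.mono_of_mem_nhdsWithin
          (Filter.inter_mem self_mem_nhdsWithin
            (nhdsWithin_le_nhds (Iio_mem_nhds (by rw [hx]; linarith))))
      have hleft : HasDerivWithinAt (f γ c) 0 (Set.Iic x) x := by
        have hψd : HasDerivWithinAt (ψ γ c) 0 (Set.Iic x) x := by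
          simpa [hψ'0] using (hasDerivAt_ψ γ c hγ x).hasDerivWithinAt
            (s := Set.Iic x)
        refine hψd.congr (fun y hy => ?_) (by rw [hfx0, hψ0])
        rcases lt_or_ge c (|y|) with h' | h'
        · simp [f_eq, not_le.mpr h']
        · have hy0 : y ≤ 0 := le_trans hy (by rw [hx]; linarith)
          have hy' : y ≤ -c := by rw [← hx]; exact hy
          have hyc : |y| = c := le_antisymm h'
            (by rw [abs_of_nonpos hy0]; linarith)
          rw [hψc y hyc]; simp [f_eq, h']
      have := hleft.union hright
      rw [Set.Iic_union_Ici] at this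
      exact hasDerivWithinAt_univ.mp this
  · -- outside region
    have hf'x : f' γ c x = x - (γ ^ 2 + c ^ 2) * x / (γ ^ 2 + x ^ 2) := by
      simp [f', not_le.mpr h]
    rw [hf'x]
    have hev : f γ c =ᶠ[nhds x] ψ γ c := by
      have : ∀ᶠ y in nhds x, c < |y| :=
        Filter.eventually_of_mem
          ((isOpen_lt continuous_const continuous_abs).mem_nhds h) (fun y hy => hy)
      filter_upwards [this] with y hy
      simp [f_eq, not_le.mpr hy]
    exact (hasDerivAt_ψ γ c hγ x).congr_of_eventuallyEq hev

noncomputable def m (γ c x : ℝ) : ℝ := x - (γ ^ 2 + c ^ 2) * x / (γ ^ 2 + x ^ 2)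

lemma m_odd (γ c x : ℝ) : m γ c (-x) = -(m γ c x) := by
  unfold m; ring

lemma m_c (γ c : ℝ) (hγ : 0 < γ) (hc : 0 < c) : m γ c c = 0 := by
  unfold m
  have : γ ^ 2 + c ^ 2 ≠ 0 := by positivity
  field_simp
  ring

lemma m_mono (γ c a b : ℝ) (hγ : 0 < γ) (hc : 0 < c) (ha : c ≤ a) (hab : a ≤ b) :
    m γ c a ≤ m γ c b := by
  have ha0 : 0 < a := lt_of_lt_of_le hc ha
  have hb0 : 0 < b := lt_of_lt_of_le ha0 hab
  have h1 : (0:ℝ) < γ ^ 2 + a ^ 2 := by positivity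
  have h2 : (0:ℝ) < γ ^ 2 + b ^ 2 := by positivity
  rw [← sub_nonneg]
  have key : m γ c b - m γ c a =
      (b - a) * (γ ^ 2 * (a ^ 2 + a * b + b ^ 2 - c ^ 2) + a ^ 2 * b ^ 2 + a * b * c ^ 2) /
        ((γ ^ 2 + a ^ 2) * (γ ^ 2 + b ^ 2)) := by
    unfold m; field_simp; ring
  rw [key]
  apply div_nonneg _ (by positivity)
  apply mul_nonneg (by linarith)
  have hc2 : c ^ 2 ≤ a ^ 2 := by nlinarith
  have hab0 : 0 ≤ a * b := by positivity
  nlinarith [sq_nonneg γ, mul_nonneg hab0 hab0, mul_nonneg hab0 (sq_nonneg c)]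

lemma m_nonneg (γ c x : ℝ) (hγ : 0 < γ) (hc : 0 < c) (hx : c ≤ x) : 0 ≤ m γ c x := by
  have := m_mono γ c c x hγ hc le_rfl hx
  rwa [m_c γ c hγ hc] at this

lemma m_nonpos (γ c x : ℝ) (hγ : 0 < γ) (hc : 0 < c) (hx : x ≤ -c) : m γ c x ≤ 0 := by
  have := m_nonneg γ c (-x) hγ hc (by linarith)
  rw [m_odd] at this
  linarith

lemma f'_mono (γ c : ℝ) (hγ : 0 < γ) (hc : 0 < c) : Monotone (f' γ c) := by
  intro a b hab
  have hfa : ∀ z : ℝ, f' γ c z = if |z| ≤ c then 0 else m γ c z := fun z => rfl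
  rw [hfa a, hfa b]
  split_ifs with h1 h2 h2
  · exact le_rfl
  · -- |a| ≤ c, |b| > c : b > c
    push_neg at h2
    have hbc : c < b := by
      rcases lt_abs.mp h2 with h' | h'
      · exact h'
      · exfalso; have := (abs_le.mp h1).1; linarith
    exact m_nonneg γ c b hγ hc hbc.le
  · -- |a| > c, |b| ≤ c : a < -c
    push_neg at h1
    have hac : a < -c := by
      rcases lt_abs.mp h1 with h' | h'
      · exfalso; have := (abs_le.mp h2).2; linarith
      · linarith
    exact m_nonpos γ c a hγ hc hac.le
  · -- both outside
    push_neg at h1 h2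
    rcases lt_abs.mp h1 with h1' | h1'
    · exact m_mono γ c a b hγ hc h1'.le hab
    · have hac : a < -c := by linarith
      rcases lt_abs.mp h2 with h2' | h2'
      · exact le_trans (m_nonpos γ c a hγ hc hac.le) (m_nonneg γ c b hγ hc h2'.le)
      · have hbc : b < -c := by linarith
        have := m_mono γ c (-b) (-a) hγ hc (by linarith) (by linarith)
        rw [m_odd, m_odd] at this
        linarith

end HocAux

theorem hoc_quadratic_minus_convex (γ c : ℝ) (hγ : 0 < γ) (hc : 0 < c) :
    ConvexOn ℝ Set.univ (fun x : ℝ => x ^ 2 / 2 - hoc γ c x) := by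
  have hdiff : Differentiable ℝ (HocAux.f γ c) :=
    fun x => (HocAux.hasDerivAt_f γ c hγ hc x).differentiableAt
  have hderiv : deriv (HocAux.f γ c) = HocAux.f' γ c :=
    funext fun x => (HocAux.hasDerivAt_f γ c hγ hc x).deriv
  have := Monotone.convexOn_univ_of_deriv hdiff
    (hderiv ▸ HocAux.f'_mono γ c hγ hc)
  exact this
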